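/- Let S be a metric space, let (μ_n) be a sequence of Borel probability measures on S converging weakly to a probability measure μ, and let (f_n) be a sequence of measurable nonnegative functions f_n : S → [0,∞]. Then ∫_S liminf_{n→∞, s'→s} f_n(s') dμ(s) ≤ liminf_{n→∞} ∫_S f_n dμ_n, where liminf_{n→∞, s'→s} f_n(s') denotes the joint lower limit as n → ∞ and s' → s. -/

import Mathlib

open MeasureTheory Filter Topology ENNReal

/-- Portmanteau-type lemma: if the `∫⁻` of every bounded continuous `ℝ≥0`-valued function
converges, then for a lower semicontinuous `ℝ≥0∞`-valued function `h` the integral against the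
limit measure is at most the liminf of the integrals. -/
private lemma lsc_le_liminf_lintegral_aux
    {S : Type*} [MetricSpace S] [MeasurableSpace S] [BorelSpace S]
    (μs : ℕ → Measure S) (μ : Measure S)
    (hkey : ∀ φ : BoundedContinuousFunction S NNReal,
      Tendsto (fun n => ∫⁻ x, φ x ∂(μs n)) atTop (𝓝 (∫⁻ x, φ x ∂μ)))
    {h : S → ℝ≥0∞} (hh : LowerSemicontinuous h) :
    ∫⁻ x, h x ∂μ ≤ liminf (fun n => ∫⁻ x, h x ∂(μs n)) atTop := by
  classical
  -- Lipschitz-type approximations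
  set A : ℕ → S → ℝ≥0∞ := fun k s => ⨅ t, (h t + k * edist s t) with hA
  set H : ℕ → S → ℝ≥0∞ := fun k s => min (k : ℝ≥0∞) (A k s) with hHdef
  have hH_le_k : ∀ k s, H k s ≤ (k : ℝ≥0∞) := fun k s => min_le_left _ _
  have hH_ne_top : ∀ k s, H k s ≠ ⊤ := fun k s =>
    ((hH_le_k k s).trans_lt (ENNReal.natCast_lt_top k)).ne
  have hA_le_h : ∀ k s, A k s ≤ h s := by
    intro k s
    refine iInf_le_of_le s ?_
    simp [edist_self]
  have hH_le_h : ∀ k s, H k s ≤ h s := fun k s => (min_le_right _ _).trans (hA_le_h k s)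
  -- Lipschitz estimates
  have hA_lip : ∀ k s t, A k s ≤ A k t + k * edist s t := by
    intro k s t
    rw [← tsub_le_iff_right]
    refine le_iInf fun t' => ?_
    rw [tsub_le_iff_right]
    calc A k s ≤ h t' + k * edist s t' := iInf_le _ t'
      _ ≤ h t' + k * (edist t t' + edist s t) := by
          gcongr
          calc edist s t' ≤ edist s t + edist t t' := edist_triangle _ _ _
            _ = edist t t' + edist s t := add_comm _ _
      _ = h t' + k * edist t t' + k * edist s t := by ring
  have hH_lip : ∀ k s t, H k s ≤ H k t + k * edist s t := by
    intro k s t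
    have h1 : H k s ≤ min ((k : ℝ≥0∞) + k * edist s t) (A k t + k * edist s t) :=
      le_min ((min_le_left _ _).trans le_self_add) ((min_le_right _ _).trans (hA_lip k s t))
    calc H k s ≤ min ((k : ℝ≥0∞) + k * edist s t) (A k t + k * edist s t) := h1
      _ = min (k : ℝ≥0∞) (A k t) + k * edist s t := min_add_add_right _ _ _
  -- continuity of the approximations
  have hH_cont : ∀ k, Continuous (H k) := by
    intro k
    rw [continuous_iff_continuousAt]
    intro s
    rw [ContinuousAt, ENNReal.tendsto_nhds (hH_ne_top k s)]
    intro ε hε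
    have hδ : (0 : ℝ≥0∞) < ε / (k + 1) := ENNReal.div_pos hε.ne' (by simp)
    filter_upwards [EMetric.ball_mem_nhds s hδ] with t ht
    have hd : ∀ a b : S, edist a b < ε / (k + 1) → (k : ℝ≥0∞) * edist a b ≤ ε := by
      intro a b hab
      calc (k : ℝ≥0∞) * edist a b ≤ ((k : ℝ≥0∞) + 1) * (ε / (k + 1)) := by
            exact mul_le_mul' le_self_add hab.le
        _ ≤ ε := ENNReal.mul_div_le
    have hts : edist t s < ε / (k + 1) := ht
    have hst : edist s t < ε / (k + 1) := by rwa [edist_comm]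
    constructor
    · rw [tsub_le_iff_right]
      calc H k s ≤ H k t + k * edist s t := hH_lip k s t
        _ ≤ H k t + ε := by gcongr; exact hd s t hst
    · calc H k t ≤ H k s + k * edist t s := hH_lip k t s
        _ ≤ H k s + ε := by gcongr; exact hd t s hts
  -- monotonicity in k
  have hH_mono : Monotone H := by
    intro k l hkl
    intro s
    refine min_le_min (by exact_mod_cast hkl) ?_
    exact le_iInf fun t => (iInf_le _ t).trans
      (add_le_add_right (mul_le_mul_left (by exact_mod_cast hkl : (k : ℝ≥0∞) ≤ l) _) _)
  -- pointwise sup of the approximations is h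
  have hH_sup : ∀ s, (⨆ k, H k s) = h s := by
    intro s
    refine le_antisymm (iSup_le fun k => hH_le_h k s) (le_of_forall_lt fun c hc => ?_)
    obtain ⟨c', hcc', hc'h⟩ := exists_between hc
    have hc'top : c' ≠ ⊤ := hc'h.ne_top
    obtain ⟨δ₀, hδ₀pos, hδ₀⟩ := EMetric.mem_nhds_iff.mp (hh s c' hc'h)
    set δ : ℝ≥0∞ := min δ₀ 1 with hδdef
    have hδpos : 0 < δ := lt_min hδ₀pos zero_lt_one
    have hδtop : δ ≠ ⊤ := ((min_le_right _ _).trans_lt ENNReal.one_lt_top).ne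
    obtain ⟨k₁, hk₁⟩ := ENNReal.exists_nat_gt (ENNReal.div_lt_top hc'top hδpos.ne').ne
    obtain ⟨k₂, hk₂⟩ := ENNReal.exists_nat_gt hc'top
    set k : ℕ := max k₁ k₂ with hk
    have hkk₁ : (k₁ : ℝ≥0∞) ≤ k := by exact_mod_cast le_max_left k₁ k₂
    have hkk₂ : (k₂ : ℝ≥0∞) ≤ k := by exact_mod_cast le_max_right k₁ k₂
    have hck : c' < (k : ℝ≥0∞) := hk₂.trans_le hkk₂
    have hcA : c' ≤ A k s := by
      refine le_iInf fun t => ?_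
      by_cases hts : edist t s < δ
      · have : t ∈ EMetric.ball s δ₀ := lt_of_lt_of_le hts (min_le_left _ _)
        exact (hδ₀ this).le.trans le_self_add
      · push_neg at hts
        have h1 : c' < (k₁ : ℝ≥0∞) * δ :=
          (ENNReal.div_lt_iff (Or.inl hδpos.ne') (Or.inl hδtop)).mp hk₁
        have h2 : (k₁ : ℝ≥0∞) * δ ≤ (k : ℝ≥0∞) * edist s t := by
          rw [edist_comm s t]
          exact mul_le_mul' hkk₁ hts
        exact (h1.le.trans h2).trans le_add_self
    have : c < H k s := lt_min (hcc'.trans_le hck.le) (hcc'.trans_le hcA)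
    exact this.trans_le (le_iSup (fun k => H k s) k)
  -- conclusion via monotone convergence and the key hypothesis
  have hcongr : ∫⁻ x, h x ∂μ = ⨆ k, ∫⁻ x, H k x ∂μ := by
    rw [← lintegral_iSup (fun k => (hH_cont k).measurable) (fun k l hkl s => hH_mono hkl s)]
    exact lintegral_congr fun s => (hH_sup s).symm
  rw [hcongr]
  refine iSup_le fun k => ?_
  -- turn `H k` into a bounded continuous `ℝ≥0`-valued function
  have hcontφ : Continuous fun s => (H k s).toNNReal := by
    rw [continuous_iff_continuousAt]
    intro s
    exact (ENNReal.tendsto_toNNReal (hH_ne_top k s)).comp (hH_cont k).continuousAt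
  have hbddφ : ∀ x : S, ((H k x).toNNReal : ℝ) ≤ (k : ℝ) := by
    intro x
    have h1 : (H k x).toNNReal ≤ ((k : ℝ≥0∞)).toNNReal :=
      ENNReal.toNNReal_mono (ENNReal.natCast_ne_top k) (hH_le_k k x)
    have h2 : (H k x).toNNReal ≤ (k : NNReal) := by simpa using h1
    exact_mod_cast h2
  set φ : BoundedContinuousFunction S NNReal :=
    ⟨⟨fun s => (H k s).toNNReal, hcontφ⟩, ⟨(k : ℝ), by
      intro x y
      simp only [ContinuousMap.coe_mk]
      rw [NNReal.dist_eq]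
      rw [abs_sub_le_iff]
      constructor
      · calc ((H k x).toNNReal : ℝ) - ((H k y).toNNReal : ℝ) ≤ ((H k x).toNNReal : ℝ) :=
            sub_le_self _ ((H k y).toNNReal.coe_nonneg)
          _ ≤ (k : ℝ) := hbddφ x
      · calc ((H k y).toNNReal : ℝ) - ((H k x).toNNReal : ℝ) ≤ ((H k y).toNNReal : ℝ) :=
            sub_le_self _ ((H k x).toNNReal.coe_nonneg)
          _ ≤ (k : ℝ) := hbddφ y⟩⟩ with hφdef
  have hφcoe : ∀ s, (φ s : ℝ≥0∞) = H k s := fun s =>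
    ENNReal.coe_toNNReal (hH_ne_top k s)
  have hφint : ∀ ν : Measure S, ∫⁻ x, (φ x : ℝ≥0∞) ∂ν = ∫⁻ x, H k x ∂ν := fun ν =>
    lintegral_congr fun s => hφcoe s
  have htendsto := hkey φ
  have hlim : ∫⁻ x, H k x ∂μ = liminf (fun n => ∫⁻ x, H k x ∂(μs n)) atTop := by
    rw [← hφint μ]
    rw [← (htendsto.liminf_eq)]
    exact congrArg (fun u => liminf u atTop) (funext fun n => hφint (μs n))
  rw [hlim]
  refine liminf_le_liminf (Eventually.of_forall fun n => ?_)
  exact lintegral_mono fun s => hH_le_h k s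

/-- Fatou's lemma for weakly converging probability measures and nonnegative
functions: the integral of the joint lower limit (as `n → ∞` and `s' → s`) is
at most the lower limit of the integrals. -/
theorem fatou_weak_convergence_nonneg
    {S : Type*} [MetricSpace S] [MeasurableSpace S] [BorelSpace S]
    (μs : ℕ → Measure S) (μ : Measure S)
    [∀ n, IsProbabilityMeasure (μs n)] [IsProbabilityMeasure μ]
    (hweak : ∀ h : S → ℝ, Continuous h → (∃ C : ℝ, ∀ s, |h s| ≤ C) →
      Tendsto (fun n => ∫ s, h s ∂(μs n)) atTop (𝓝 (∫ s, h s ∂μ)))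
    (f : ℕ → S → ℝ≥0∞) (hf : ∀ n, Measurable (f n)) :
    ∫⁻ s, liminf (fun p : ℕ × S => f p.1 p.2) (atTop ×ˢ 𝓝 s) ∂μ ≤
      liminf (fun n => ∫⁻ s, f n s ∂(μs n)) atTop := by
  classical
  -- Step 1: weak convergence in the sense of `ProbabilityMeasure`
  set P : ℕ → ProbabilityMeasure S := fun n => ⟨μs n, inferInstance⟩ with hPdef
  set Q : ProbabilityMeasure S := ⟨μ, inferInstance⟩ with hQdef
  have hP : Tendsto P atTop (𝓝 Q) := by
    rw [ProbabilityMeasure.tendsto_iff_forall_integral_tendsto]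
    intro g
    exact hweak g g.continuous ⟨‖g‖, fun s => by
      simpa [Real.norm_eq_abs] using g.norm_coe_le_norm s⟩
  have hkey : ∀ φ : BoundedContinuousFunction S NNReal,
      Tendsto (fun n => ∫⁻ x, φ x ∂(μs n)) atTop (𝓝 (∫⁻ x, φ x ∂μ)) := by
    intro φ
    exact ProbabilityMeasure.tendsto_iff_forall_lintegral_tendsto.mp hP φ
  -- Step 2: discretized infima over shrinking balls
  set r : ℕ → ℝ := fun N => ((N : ℝ) + 1)⁻¹ with hrdef
  have hr_pos : ∀ N, 0 < r N := fun N => by positivity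
  have hr_anti : ∀ {N M : ℕ}, N ≤ M → r M ≤ r N := by
    intro N M hNM
    apply inv_anti₀ (by positivity)
    exact_mod_cast add_le_add_left (Nat.cast_le.mpr hNM) 1
  set G : ℕ → S → ℝ≥0∞ := fun N s =>
    ⨅ p ∈ (Set.Ici N) ×ˢ (Metric.ball s (r N)), f p.1 p.2 with hGdef
  set Gh : ℕ → S → ℝ≥0∞ := fun N s => ⨆ x ∈ Metric.ball s (r N), G N x with hGhdef
  -- G is monotone in N
  have hG_mono : ∀ s, Monotone fun N => G N s := by
    intro s N M hNM
    refine iInf_le_iInf_of_subset ?_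
    rintro ⟨m, x⟩ ⟨hm, hx⟩
    exact ⟨Set.Ici_subset_Ici.mpr hNM hm, Metric.ball_subset_ball (hr_anti hNM) hx⟩
  -- the joint liminf equals the sup of the G N
  have hg_eq : ∀ s, liminf (fun p : ℕ × S => f p.1 p.2) (atTop ×ˢ 𝓝 s) = ⨆ N, G N s := by
    intro s
    rw [liminf_eq_iSup_iInf]
    apply le_antisymm
    · refine iSup₂_le fun u hu => ?_
      obtain ⟨t₁, ht₁, t₂, ht₂, hsub⟩ := Filter.mem_prod_iff.mp hu
      obtain ⟨a, ha⟩ := mem_atTop_sets.mp ht₁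
      obtain ⟨ε, hε, hball⟩ := Metric.mem_nhds_iff.mp ht₂
      obtain ⟨M, hM⟩ := exists_nat_gt (1 / ε)
      have hMpos : 0 < (M : ℝ) := lt_of_lt_of_le (by positivity) hM.le
      set N : ℕ := max a M with hN
      have hrN : r N < ε := by
        have h1 : (M : ℝ) ≤ (N : ℝ) + 1 := by
          have : (M : ℝ) ≤ (N : ℝ) := by exact_mod_cast le_max_right a M
          linarith
        have hMinv : (M : ℝ)⁻¹ < ε := inv_lt_of_inv_lt₀ hε (by rwa [one_div] at hM)
        calc r N ≤ (M : ℝ)⁻¹ := inv_anti₀ hMpos h1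
          _ < ε := hMinv
      have hsubset : (Set.Ici N) ×ˢ (Metric.ball s (r N)) ⊆ u := by
        rintro ⟨m, x⟩ ⟨hm, hx⟩
        apply hsub
        constructor
        · exact ha m (le_trans (le_max_left a M) hm)
        · exact hball (Metric.ball_subset_ball hrN.le hx)
      refine le_trans (iInf_le_iInf_of_subset hsubset) ?_
      exact le_iSup (fun N => G N s) N
    · refine iSup_le fun N => ?_
      refine le_iSup₂_of_le ((Set.Ici N) ×ˢ (Metric.ball s (r N))) ?_ le_rfl
      exact prod_mem_prod (mem_atTop N) (Metric.ball_mem_nhds s (hr_pos N))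
  -- G ≤ Gh
  have hG_le_Gh : ∀ N s, G N s ≤ Gh N s := fun N s =>
    le_iSup₂_of_le s (Metric.mem_ball_self (hr_pos N)) le_rfl
  -- Gh N ≤ f m for m ≥ N
  have hGh_le_f : ∀ N m, N ≤ m → ∀ s, Gh N s ≤ f m s := by
    intro N m hNm s
    refine iSup₂_le fun x hx => ?_
    refine iInf₂_le (m, s) ?_
    exact ⟨hNm, by rwa [Metric.mem_ball, dist_comm, ← Metric.mem_ball]⟩
  -- Gh N is lower semicontinuous
  have hGh_lsc : ∀ N, LowerSemicontinuous (Gh N) := by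
    intro N s a ha
    obtain ⟨x, hx, hax⟩ : ∃ x ∈ Metric.ball s (r N), a < G N x := by
      by_contra hcon
      push_neg at hcon
      exact absurd (iSup₂_le hcon) (not_le_of_gt ha)
    have hsx : s ∈ Metric.ball x (r N) := by
      rwa [Metric.mem_ball, dist_comm, ← Metric.mem_ball]
    filter_upwards [Metric.isOpen_ball.mem_nhds hsx] with t ht
    have hxt : x ∈ Metric.ball t (r N) := by
      rwa [Metric.mem_ball, dist_comm, ← Metric.mem_ball]
    exact hax.trans_le (le_iSup₂_of_le x hxt le_rfl)
  -- G N is upper semicontinuous, hence measurable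
  have hG_usc : ∀ N, UpperSemicontinuous (G N) := by
    intro N s a ha
    obtain ⟨⟨m, x⟩, hmx, hfa⟩ : ∃ p ∈ (Set.Ici N) ×ˢ (Metric.ball s (r N)), f p.1 p.2 < a := by
      by_contra hcon
      push_neg at hcon
      exact absurd (le_iInf₂ hcon) (not_le_of_gt ha)
    obtain ⟨hm, hx⟩ := hmx
    have hsx : s ∈ Metric.ball x (r N) := by
      rwa [Metric.mem_ball, dist_comm, ← Metric.mem_ball]
    filter_upwards [Metric.isOpen_ball.mem_nhds hsx] with t ht
    have hxt : x ∈ Metric.ball t (r N) := by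
      rwa [Metric.mem_ball, dist_comm, ← Metric.mem_ball]
    exact lt_of_le_of_lt (iInf₂_le (m, x) ⟨hm, hxt⟩) hfa
  -- assemble
  calc ∫⁻ s, liminf (fun p : ℕ × S => f p.1 p.2) (atTop ×ˢ 𝓝 s) ∂μ
      = ∫⁻ s, ⨆ N, G N s ∂μ := lintegral_congr fun s => hg_eq s
    _ = ⨆ N, ∫⁻ s, G N s ∂μ :=
        lintegral_iSup (fun N => (hG_usc N).measurable) (fun N M hNM s => hG_mono s hNM)
    _ ≤ liminf (fun n => ∫⁻ s, f n s ∂(μs n)) atTop := by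
        refine iSup_le fun N => ?_
        calc ∫⁻ s, G N s ∂μ ≤ ∫⁻ s, Gh N s ∂μ := lintegral_mono (hG_le_Gh N)
          _ ≤ liminf (fun n => ∫⁻ s, Gh N s ∂(μs n)) atTop :=
              lsc_le_liminf_lintegral_aux μs μ hkey (hGh_lsc N)
          _ ≤ liminf (fun n => ∫⁻ s, f n s ∂(μs n)) atTop := by
              refine liminf_le_liminf ?_
              filter_upwards [eventually_ge_atTop N] with m hm
              exact lintegral_mono (hGh_le_f N m hm)
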